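/- Let $Q=(x_{i_1}^{\alpha_1},\ldots,x_{i_r}^{\alpha_r})$ be an ideal of $R=K[x_1,\ldots,x_n]$ generated by pure powers of distinct variables, with each $\alpha_j \ge 1$. Then for all integers $k > s$ with $s \le r$, the colon ideal $(Q^k : \prod_{j=1}^{s} x_{i_j}^{\alpha_j})$ equals $Q^{k-s}$. -/

import Mathlib

open MvPolynomial

section Helpers

lemma aux_prod_pow_mem_pow_sum {R : Type*} [CommRing R] {J : Type*} (S : Finset J)
    (Q : Ideal R) (g : J → R) (c : J → ℕ) (h : ∀ j ∈ S, g j ∈ Q) :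
    (∏ j ∈ S, g j ^ c j) ∈ Q ^ (∑ j ∈ S, c j) := by
  classical
  induction S using Finset.induction with
  | empty => simp
  | insert a S' ha ih =>
    rw [Finset.prod_insert ha, Finset.sum_insert ha, pow_add]
    exact Ideal.mul_mem_mul (Ideal.pow_mem_pow (h _ (Finset.mem_insert_self a S')) _)
      (ih fun j hj => h j (Finset.mem_insert_of_mem hj))

lemma aux_exists_le_sum {J : Type*} [Fintype J] [DecidableEq J] (d : J → ℕ) :
    ∀ N, N ≤ ∑ j, d j → ∃ d' : J → ℕ, (∀ j, d' j ≤ d j) ∧ ∑ j, d' j = N := by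
  intro N
  induction N with
  | zero => exact fun _ => ⟨fun _ => 0, fun j => Nat.zero_le _, by simp⟩
  | succ N ih =>
    intro hN
    obtain ⟨d', hle, hsum⟩ := ih (Nat.le_of_succ_le hN)
    have hex : ∃ j, d' j < d j := by
      by_contra hcon
      push_neg at hcon
      have : ∑ j, d j ≤ ∑ j, d' j := Finset.sum_le_sum fun j _ => hcon j
      omega
    obtain ⟨j0, hj0⟩ := hex
    refine ⟨Function.update d' j0 (d' j0 + 1), ?_, ?_⟩
    · intro j
      rcases eq_or_ne j j0 with rfl | h
      · simpa using hj0
      · simpa [Function.update_of_ne h] using hle j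
    · rw [Finset.sum_update_of_mem (Finset.mem_univ _)]
      rw [Finset.sum_eq_add_sum_sdiff_singleton_of_mem (Finset.mem_univ j0) d'] at hsum
      omega

lemma aux_sum_single_apply_eq {n r : ℕ} {ι : Fin r → Fin n} (hι : Function.Injective ι)
    (b : Fin r → ℕ) (j0 : Fin r) :
    (∑ j, Finsupp.single (ι j) (b j)) (ι j0) = b j0 := by
  rw [Finsupp.finset_sum_apply]
  rw [Finset.sum_eq_single j0]
  · simp
  · intro j _ hne
    rw [Finsupp.single_apply, if_neg (fun h => hne (hι h))]
  · simp

lemma aux_sum_single_apply_ne {n r : ℕ} (ι : Fin r → Fin n) (b : Fin r → ℕ) (x : Fin n)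
    (hx : ∀ j, ι j ≠ x) : (∑ j, Finsupp.single (ι j) (b j)) x = 0 := by
  rw [Finsupp.finset_sum_apply]
  exact Finset.sum_eq_zero fun j _ => by rw [Finsupp.single_apply, if_neg (hx j)]

lemma aux_monomial_prod {K : Type*} [CommSemiring K] {n : ℕ} {J : Type*} (S : Finset J)
    (t : J → (Fin n →₀ ℕ)) :
    (monomial (∑ j ∈ S, t j) (1 : K)) = ∏ j ∈ S, monomial (t j) 1 := by
  classical
  induction S using Finset.induction with
  | empty => simp [monomial_zero']
  | insert a S' ha ih =>
    rw [Finset.prod_insert ha, Finset.sum_insert ha, ← ih, monomial_mul, one_mul]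

lemma aux_pow_span_eq {K : Type*} [Field K] {n r : ℕ} (ι : Fin r → Fin n) (α : Fin r → ℕ)
    (k : ℕ) :
    (Ideal.span (Set.range fun j : Fin r => (X (ι j) : MvPolynomial (Fin n) K) ^ α j)) ^ k
      = Ideal.span ((fun t => monomial t (1 : K)) ''
          {t | ∃ c : Fin r → ℕ, (∑ j, c j) = k ∧
            t = ∑ j, Finsupp.single (ι j) (c j * α j)}) := by
  classical
  apply le_antisymm
  · induction k with
    | zero =>
      rw [pow_zero, Ideal.one_eq_top, top_le_iff, Ideal.eq_top_iff_one]
      apply Ideal.subset_span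
      refine ⟨0, ⟨fun _ => 0, by simp, by simp⟩, by simp [monomial_zero']⟩
    | succ k ih =>
      rw [pow_succ]
      calc _ ≤ (Ideal.span ((fun t => monomial t (1 : K)) ''
            {t | ∃ c : Fin r → ℕ, (∑ j, c j) = k ∧
              t = ∑ j, Finsupp.single (ι j) (c j * α j)})) *
            Ideal.span (Set.range fun j : Fin r => (X (ι j) : MvPolynomial (Fin n) K) ^ α j) :=
          Ideal.mul_mono ih le_rfl
        _ ≤ _ := by
          rw [Ideal.span_mul_span']
          rw [Ideal.span_le]
          rintro x ⟨a, ⟨ta, ⟨c, hc, rfl⟩, rfl⟩, b, ⟨j, rfl⟩, rfl⟩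
          apply Ideal.subset_span
          refine ⟨(∑ j', Finsupp.single (ι j') (c j' * α j')) + Finsupp.single (ι j) (α j),
            ⟨fun j' => c j' + if j' = j then 1 else 0, ?_, ?_⟩, ?_⟩
          · rw [Finset.sum_add_distrib, hc, Finset.sum_ite_eq' Finset.univ j fun _ => 1]
            simp
          · have h1 : ∀ j' : Fin r,
                Finsupp.single (ι j') ((c j' + if j' = j then 1 else 0) * α j')
                  = Finsupp.single (ι j') (c j' * α j')
                    + (if j' = j then Finsupp.single (ι j') (α j') else 0) := by
              intro j'
              split <;> simp [add_mul, Finsupp.single_add, *]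
            rw [Finset.sum_congr rfl fun j' _ => h1 j', Finset.sum_add_distrib,
              Finset.sum_ite_eq' Finset.univ j fun j' => Finsupp.single (ι j') (α j')]
            simp
          · simp only [Set.mem_setOf_eq, X_pow_eq_monomial, monomial_mul, mul_one]
  · rw [Ideal.span_le]
    rintro x ⟨t, ⟨c, hc, rfl⟩, rfl⟩
    have h2 : (monomial (∑ j, Finsupp.single (ι j) (c j * α j)) (1 : K))
        = ∏ j : Fin r, ((X (ι j) : MvPolynomial (Fin n) K) ^ α j) ^ c j := by
      rw [aux_monomial_prod]
      refine Finset.prod_congr rfl fun j _ => ?_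
      rw [← pow_mul, X_pow_eq_monomial, mul_comm]
    simp only [SetLike.mem_coe]
    rw [h2, ← hc]
    exact aux_prod_pow_mem_pow_sum _ _ _ _ fun j _ => Ideal.subset_span ⟨j, rfl⟩

end Helpers

/-- For `Q = (x_{i_1}^{α_1},…,x_{i_r}^{α_r})` generated by pure powers of
distinct variables, `(Q^k : ∏_{j=1}^s x_{i_j}^{α_j}) = Q^{k-s}` for `k > s`, `s ≤ r`. -/
theorem stmt0 {K : Type*} [Field K] {n r : ℕ}
    (ι : Fin r → Fin n) (hι : Function.Injective ι)
    (α : Fin r → ℕ) (hα : ∀ j, 1 ≤ α j)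
    (Q : Ideal (MvPolynomial (Fin n) K))
    (hQ : Q = Ideal.span
      (Set.range fun j : Fin r => (X (ι j) : MvPolynomial (Fin n) K) ^ α j))
    (s k : ℕ) (hs : s ≤ r) (hk : s < k) :
    Submodule.colon (Q ^ k)
      (Ideal.span {∏ j : Fin s,
        (X (ι (Fin.castLE hs j)) : MvPolynomial (Fin n) K) ^ α (Fin.castLE hs j)})
      = Q ^ (k - s) := by
  classical
  subst hQ
  have hf : (∏ j : Fin s,
        (X (ι (Fin.castLE hs j)) : MvPolynomial (Fin n) K) ^ α (Fin.castLE hs j))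
      = monomial (∑ j : Fin s,
          Finsupp.single (ι (Fin.castLE hs j)) (α (Fin.castLE hs j))) 1 := by
    rw [aux_monomial_prod]
    exact Finset.prod_congr rfl fun j _ => X_pow_eq_monomial
  have hμlt : ∀ j : Fin r, (j : ℕ) < s →
      (∑ j' : Fin s, Finsupp.single (ι (Fin.castLE hs j')) (α (Fin.castLE hs j'))) (ι j)
        = α j := by
    intro j hj
    rw [Finsupp.finset_sum_apply, Finset.sum_eq_single (⟨(j : ℕ), hj⟩ : Fin s)]
    · have hcast : Fin.castLE hs (⟨(j : ℕ), hj⟩ : Fin s) = j := by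
        apply Fin.ext; rfl
      rw [hcast]; simp
    · intro j' _ hne
      rw [Finsupp.single_apply, if_neg]
      intro h
      apply hne
      have h2 := hι h
      apply Fin.ext
      have := congrArg Fin.val h2
      simpa using this
    · simp
  have hμge : ∀ j : Fin r, ¬ (j : ℕ) < s →
      (∑ j' : Fin s, Finsupp.single (ι (Fin.castLE hs j')) (α (Fin.castLE hs j'))) (ι j)
        = 0 := by
    intro j hj
    rw [Finsupp.finset_sum_apply]
    apply Finset.sum_eq_zero
    intro j' _
    rw [Finsupp.single_apply, if_neg]
    intro h
    have h2 := congrArg Fin.val (hι h)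
    simp only [Fin.coe_castLE] at h2
    have := j'.isLt
    omega
  apply le_antisymm
  · -- hard direction
    intro g hg
    rw [Ideal.mem_colon_span_singleton, hf] at hg
    rw [aux_pow_span_eq ι α k, mem_ideal_span_monomial_image] at hg
    rw [aux_pow_span_eq ι α (k - s), mem_ideal_span_monomial_image]
    intro m hm
    have hm' : m + ∑ j : Fin s,
        Finsupp.single (ι (Fin.castLE hs j)) (α (Fin.castLE hs j)) ∈ (g * monomial
          (∑ j : Fin s, Finsupp.single (ι (Fin.castLE hs j)) (α (Fin.castLE hs j)))
          (1 : K)).support := by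
      rw [mem_support_iff, coeff_mul_monomial, mul_one]
      exact mem_support_iff.mp hm
    obtain ⟨t, ⟨c, hc, rfl⟩, hle⟩ := hg _ hm'
    have key : ∀ j : Fin r, c j * α j ≤ m (ι j) +
        (∑ j' : Fin s, Finsupp.single (ι (Fin.castLE hs j')) (α (Fin.castLE hs j')))
          (ι j) := by
      intro j
      have h1 := Finsupp.le_def.mp hle (ι j)
      rw [Finsupp.add_apply, aux_sum_single_apply_eq hι] at h1
      exact h1
    set d : Fin r → ℕ := fun j => if (j : ℕ) < s then c j - 1 else c j with hd
    have hdle : ∀ j, d j * α j ≤ m (ι j) := by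
      intro j
      by_cases h : (j : ℕ) < s
      · have h1 := key j
        rw [hμlt j h] at h1
        have h2 : d j * α j = c j * α j - α j := by
          simp only [hd, if_pos h, Nat.sub_mul, one_mul]
        omega
      · have h1 := key j
        rw [hμge j h] at h1
        simpa [hd, if_neg h] using h1
    have hsd : k - s ≤ ∑ j, d j := by
      have hpt : ∀ j : Fin r, c j ≤ d j + (if (j : ℕ) < s then 1 else 0) := by
        intro j
        by_cases h : (j : ℕ) < s <;> simp [hd, h] <;> omega
      have hsum1 : ∑ j : Fin r, (if (j : ℕ) < s then 1 else 0) = s := by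
        rw [Fin.sum_univ_eq_sum_range (fun i => if i < s then 1 else 0) r]
        have hgen : ∀ r', s ≤ r' →
            ∑ i ∈ Finset.range r', (if i < s then 1 else 0) = s := by
          intro r'
          induction r' with
          | zero => intro h; simp only [Finset.range_zero, Finset.sum_empty]; omega
          | succ r'' ih =>
            intro h
            rw [Finset.sum_range_succ]
            by_cases h2 : s ≤ r''
            · rw [ih h2, if_neg (by omega)]
              omega
            · have heq : ∑ i ∈ Finset.range r'', (if i < s then 1 else 0)
                  = ∑ _i ∈ Finset.range r'', 1 :=
                Finset.sum_congr rfl fun i hi => by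
                  rw [if_pos]; have := Finset.mem_range.mp hi; omega
              rw [heq, Finset.sum_const, Finset.card_range, smul_eq_mul, mul_one,
                if_pos (by omega)]
              omega
        exact hgen r hs
      have hsum2 := Finset.sum_le_sum fun j (_ : j ∈ Finset.univ) => hpt j
      rw [Finset.sum_add_distrib, hsum1, hc] at hsum2
      omega
    obtain ⟨d', hd'le, hd'sum⟩ := aux_exists_le_sum d (k - s) hsd
    refine ⟨∑ j, Finsupp.single (ι j) (d' j * α j), ⟨d', hd'sum, rfl⟩, ?_⟩
    rw [Finsupp.le_def]
    intro x
    by_cases hx : ∃ j, ι j = x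
    · obtain ⟨j, rfl⟩ := hx
      rw [aux_sum_single_apply_eq hι]
      exact le_trans (Nat.mul_le_mul_right _ (hd'le j)) (hdle j)
    · push_neg at hx
      rw [aux_sum_single_apply_ne _ _ _ hx]
      exact Nat.zero_le _
  · -- easy direction
    intro g hg
    rw [Ideal.mem_colon_span_singleton]
    have hfQ : (∏ j : Fin s,
        (X (ι (Fin.castLE hs j)) : MvPolynomial (Fin n) K) ^ α (Fin.castLE hs j))
        ∈ (Ideal.span (Set.range fun j : Fin r =>
            (X (ι j) : MvPolynomial (Fin n) K) ^ α j)) ^ s := by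
      have h := aux_prod_pow_mem_pow_sum (Finset.univ : Finset (Fin s))
        (Ideal.span (Set.range fun j : Fin r =>
          (X (ι j) : MvPolynomial (Fin n) K) ^ α j))
        (fun j => (X (ι (Fin.castLE hs j)) : MvPolynomial (Fin n) K) ^ α (Fin.castLE hs j))
        (fun _ => 1)
        (fun j _ => Ideal.subset_span ⟨Fin.castLE hs j, rfl⟩)
      simpa using h
    have h := Ideal.mul_mem_mul hg hfQ
    rwa [← pow_add, Nat.sub_add_cancel hk.le] at h
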